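/- arXiv:1912.11158 — 2 statements merged into one kernel-verified Lean document; each statement's English description precedes it below -/
import Mathlib

section
/- If F₁ is a PEF with power β for a single-variable model M₁ and F₂ is a PEF with power β for model M₂, then the product function G(c₁,z₁,c₂,z₂) = F₁(c₁,z₁)·F₂(c₂,z₂) is a PEF with power β for any chained distribution μ on ((C₁,Z₁),(C₂,Z₂)) whose first-marginal lies in M₁ and whose conditional distribution of (C₂,Z₂) given each (c₁,z₁) lies in M₂. -/
open Finset

/-- Marginal distribution of the input `z`. -/
noncomputable def margZ {C Z : Type*} [Fintype C] (μ : C × Z → ℝ) (z : Z) : ℝ :=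
  ∑ c, μ (c, z)

/-- Conditional probability `μ(C = c | Z = z)`, defined as 0 when `μ(Z = z) = 0`. -/
noncomputable def condP {C Z : Type*} [Fintype C] (μ : C × Z → ℝ) (c : C) (z : Z) : ℝ :=
  if margZ μ z = 0 then 0 else μ (c, z) / margZ μ z

/-- `F` is a PEF with power `β` for the model `M`. -/
def IsPEF {C Z : Type*} [Fintype C] [Fintype Z]
    (M : Set (C × Z → ℝ)) (β : ℝ) (F : C × Z → ℝ) : Prop :=
  (∀ p, 0 ≤ F p) ∧
  ∀ μ ∈ M, ∑ p : C × Z, μ p * F p * condP μ p.1 p.2 ^ β ≤ 1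

/-- Chaining of PEFs: if `F₁` is a PEF with power `β` for `M₁` and `F₂` is a PEF with power `β`
for `M₂`, then `G(c₁,z₁,c₂,z₂) = F₁(c₁,z₁)·F₂(c₂,z₂)` satisfies the chained PEF inequality for
any distribution `μ` on `(C₁×Z₁)×(C₂×Z₂)` whose first marginal lies in `M₁` and whose conditional
distribution of the second pair given each first pair (of positive probability) lies in `M₂`. -/
theorem stmt1 {C₁ Z₁ C₂ Z₂ : Type*}
    [Fintype C₁] [Fintype Z₁] [Fintype C₂] [Fintype Z₂]
    (β : ℝ) (hβ : 0 < β)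
    (M₁ : Set (C₁ × Z₁ → ℝ)) (M₂ : Set (C₂ × Z₂ → ℝ))
    (F₁ : C₁ × Z₁ → ℝ) (F₂ : C₂ × Z₂ → ℝ)
    (hF₁ : IsPEF M₁ β F₁) (hF₂ : IsPEF M₂ β F₂)
    (μ : (C₁ × Z₁) × (C₂ × Z₂) → ℝ)
    (hnn : ∀ p, 0 ≤ μ p) (hsum : ∑ p, μ p = 1)
    (μ₁ : C₁ × Z₁ → ℝ) (hμ₁ : μ₁ = fun p₁ => ∑ p₂, μ (p₁, p₂))
    (hμ₁M : μ₁ ∈ M₁)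
    (μ₂ : C₁ × Z₁ → C₂ × Z₂ → ℝ)
    (hμ₂ : ∀ p₁, μ₁ p₁ ≠ 0 → μ₂ p₁ = fun p₂ => μ (p₁, p₂) / μ₁ p₁)
    (hμ₂M : ∀ p₁, μ₁ p₁ ≠ 0 → μ₂ p₁ ∈ M₂) :
    ∑ p : (C₁ × Z₁) × (C₂ × Z₂),
      μ p * (F₁ p.1 * F₂ p.2) *
        (condP μ₁ p.1.1 p.1.2 ^ β * condP (μ₂ p.1) p.2.1 p.2.2 ^ β) ≤ 1 := by

  have hμ₁nn : ∀ p₁, 0 ≤ μ₁ p₁ := by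
    intro p₁; rw [hμ₁]; exact Finset.sum_nonneg fun _ _ => hnn _
  have hcond1nn : ∀ p₁ : C₁ × Z₁, 0 ≤ condP μ₁ p₁.1 p₁.2 := by
    intro p₁
    unfold condP
    split
    · exact le_refl 0
    · exact div_nonneg (hμ₁nn _) (Finset.sum_nonneg fun _ _ => hμ₁nn _)
  rw [Fintype.sum_prod_type]
  have key : ∀ p₁ : C₁ × Z₁,
      (∑ p₂, μ (p₁, p₂) * (F₁ p₁ * F₂ p₂) *
        (condP μ₁ p₁.1 p₁.2 ^ β * condP (μ₂ p₁) p₂.1 p₂.2 ^ β))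
        ≤ μ₁ p₁ * F₁ p₁ * condP μ₁ p₁.1 p₁.2 ^ β := by
    intro p₁
    by_cases h : μ₁ p₁ = 0
    · have hz : ∀ p₂ : C₂ × Z₂, μ (p₁, p₂) = 0 := by
        intro p₂
        have hs : ∑ p₂, μ (p₁, p₂) = 0 := by rw [hμ₁] at h; exact h
        exact (Finset.sum_eq_zero_iff_of_nonneg (fun _ _ => hnn _)).mp hs p₂ (Finset.mem_univ _)
      simp [hz, h]
    · have hinner := hF₂.2 (μ₂ p₁) (hμ₂M p₁ h)
      have hfac : ∀ p₂ : C₂ × Z₂, μ (p₁, p₂) = μ₁ p₁ * μ₂ p₁ p₂ := by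
        intro p₂; rw [hμ₂ p₁ h]; field_simp
      have hA : 0 ≤ μ₁ p₁ * F₁ p₁ * condP μ₁ p₁.1 p₁.2 ^ β :=
        mul_nonneg (mul_nonneg (hμ₁nn _) (hF₁.1 _)) (Real.rpow_nonneg (hcond1nn _) _)
      calc (∑ p₂, μ (p₁, p₂) * (F₁ p₁ * F₂ p₂) *
            (condP μ₁ p₁.1 p₁.2 ^ β * condP (μ₂ p₁) p₂.1 p₂.2 ^ β))
          = (μ₁ p₁ * F₁ p₁ * condP μ₁ p₁.1 p₁.2 ^ β) *
            ∑ p₂, μ₂ p₁ p₂ * F₂ p₂ * condP (μ₂ p₁) p₂.1 p₂.2 ^ β := by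
            rw [Finset.mul_sum]; apply Finset.sum_congr rfl; intro p₂ _
            rw [hfac p₂]; ring
        _ ≤ (μ₁ p₁ * F₁ p₁ * condP μ₁ p₁.1 p₁.2 ^ β) * 1 :=
            mul_le_mul_of_nonneg_left hinner hA
        _ = μ₁ p₁ * F₁ p₁ * condP μ₁ p₁.1 p₁.2 ^ β := mul_one _
  calc (∑ p₁ : C₁ × Z₁, ∑ p₂ : C₂ × Z₂, μ (p₁, p₂) * (F₁ p₁ * F₂ p₂) *
          (condP μ₁ p₁.1 p₁.2 ^ β * condP (μ₂ p₁) p₂.1 p₂.2 ^ β))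
      ≤ ∑ p₁ : C₁ × Z₁, μ₁ p₁ * F₁ p₁ * condP μ₁ p₁.1 p₁.2 ^ β :=
        Finset.sum_le_sum fun p₁ _ => key p₁
    _ ≤ 1 := hF₁.2 μ₁ hμ₁M
end

section
/- If an experiment produces a product T = ∏_{i=1}^{n} G_i of per-block PEFs each with power β for its model conditional on the past, then for every p ≥ 1/|C⃗| and ε_s ∈ (0,1], and every distribution μ satisfying the chained model, either the probability κ of the event Φ = {T ≥ 1/(p^β ε_s)} is less than any given κ' > 0, or the ε_s-smooth conditional min-entropy of the outputs conditioned on Φ satisfies H_min^{ε_s}(C⃗|Z⃗,E)_{μ|Φ} ≥ −log₂ p + ((1+β)/β)·log₂ κ'. -/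
open Finset
open scoped Classical

/-- Marginal probability of `(z, e)`. -/
noncomputable def margZE {Cv Zv Ev : Type*} [Fintype Cv]
    (μ : Cv × Zv × Ev → ℝ) (z : Zv) (e : Ev) : ℝ :=
  ∑ c, μ (c, z, e)

/-- Conditional probability `μ(c | z, e)`, defined as 0 when `μ(z,e) = 0`. -/
noncomputable def condC {Cv Zv Ev : Type*} [Fintype Cv]
    (μ : Cv × Zv × Ev → ℝ) (c : Cv) (z : Zv) (e : Ev) : ℝ :=
  if margZE μ z e = 0 then 0 else μ (c, z, e) / margZE μ z e

/-- Marginal probability of the side information `e`. -/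
noncomputable def margE {Cv Zv Ev : Type*} [Fintype Cv] [Fintype Zv]
    (μ : Cv × Zv × Ev → ℝ) (e : Ev) : ℝ :=
  ∑ c, ∑ z, μ (c, z, e)

/-- Total-variation distance. -/
noncomputable def TV {X : Type*} [Fintype X] (μ ν : X → ℝ) : ℝ :=
  (1 / 2) * ∑ x, |μ x - ν x|

/-- Average maximum guessing probability of `C` given `Z` and `E`. -/
noncomputable def PguessE {Cv Zv Ev : Type*} [Fintype Cv] [Fintype Zv] [Fintype Ev] [Nonempty Cv]
    (ν : Cv × Zv × Ev → ℝ) : ℝ :=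
  ∑ z, ∑ e, margZE ν z e * Finset.univ.sup' Finset.univ_nonempty (fun c => condC ν c z e)

/-- `ε_s`-smooth conditional min-entropy of `C` given `Z` and `E`. -/
noncomputable def HminE {Cv Zv Ev : Type*} [Fintype Cv] [Fintype Zv] [Fintype Ev] [Nonempty Cv]
    (μ : Cv × Zv × Ev → ℝ) (εs : ℝ) : ℝ :=
  - Real.logb 2 (sInf {pg : ℝ | ∃ ν : Cv × Zv × Ev → ℝ,
      (∀ x, 0 ≤ ν x) ∧ (∑ x, ν x = 1) ∧ TV ν μ ≤ εs ∧ PguessE ν = pg})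

private lemma sum_triple_eq {Cv Zv Ev : Type*} [Fintype Cv] [Fintype Zv] [Fintype Ev]
    (f : Cv × Zv × Ev → ℝ) :
    ∑ x, f x = ∑ c, ∑ z, ∑ e, f (c, z, e) := by
  rw [Fintype.sum_prod_type]
  exact Finset.sum_congr rfl fun c _ => Fintype.sum_prod_type _

private lemma sum_margZE_eq {Cv Zv Ev : Type*} [Fintype Cv] [Fintype Zv] [Fintype Ev]
    (f : Cv × Zv × Ev → ℝ) :
    ∑ z, ∑ e, margZE f z e = ∑ x, f x := by
  simp only [margZE]
  calc ∑ z, ∑ e, ∑ c, f (c, z, e)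
      = ∑ z, ∑ c, ∑ e, f (c, z, e) :=
        Finset.sum_congr rfl fun z _ => Finset.sum_comm
    _ = ∑ c, ∑ z, ∑ e, f (c, z, e) := Finset.sum_comm
    _ = ∑ x, f x := (sum_triple_eq f).symm

private lemma sum_triple_eq_e {Cv Zv Ev : Type*} [Fintype Cv] [Fintype Zv] [Fintype Ev]
    (f : Cv × Zv × Ev → ℝ) :
    ∑ x, f x = ∑ e, ∑ c, ∑ z, f (c, z, e) := by
  rw [sum_triple_eq f]
  calc ∑ c, ∑ z, ∑ e, f (c, z, e)
      = ∑ c, ∑ e, ∑ z, f (c, z, e) :=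
        Finset.sum_congr rfl fun c _ => Finset.sum_comm
    _ = ∑ e, ∑ c, ∑ z, f (c, z, e) := Finset.sum_comm

/-- Theorem 1 of the supplement (dichotomy form): if `T` (the product of per-block PEFs with
power `β`) satisfies the PEF inequality for the distribution conditional on each value `e` of the
classical side information, then for every `p` with `1/|C⃗| ≤ p ≤ 1`, `ε_s ∈ (0,1]` and
`κ' > 0`: either the probability `κ` of the event `Φ = {T ≥ 1/(p^β ε_s)}` is less than `κ'`, or
the `ε_s`-smooth conditional min-entropy of the outputs given the inputs and `E`, conditioned on
`Φ`, is at least `−log₂ p + ((1+β)/β)·log₂ κ'`. -/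
theorem stmt13 {Cv Zv Ev : Type*} [Fintype Cv] [Fintype Zv] [Fintype Ev] [Nonempty Cv]
    (β : ℝ) (hβ : 0 < β)
    (μ : Cv × Zv × Ev → ℝ) (hnn : ∀ x, 0 ≤ μ x) (hsum : ∑ x, μ x = 1)
    (T : Cv × Zv → ℝ) (hT : ∀ q, 0 ≤ T q)
    (hPEF : ∀ e : Ev, margE μ e ≠ 0 →
      ∑ c, ∑ z, (μ (c, z, e) / margE μ e) * T (c, z) * condC μ c z e ^ β ≤ 1)
    (p εs κ' : ℝ)
    (hp : 1 / (Fintype.card Cv : ℝ) ≤ p) (hp1 : p ≤ 1)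
    (hεs : 0 < εs) (hεs1 : εs ≤ 1) (hκ' : 0 < κ')
    (κ : ℝ)
    (hκ : κ = ∑ x ∈ Finset.univ.filter
        (fun x : Cv × Zv × Ev => 1 / (p ^ β * εs) ≤ T (x.1, x.2.1)), μ x) :
    κ < κ' ∨
      HminE (fun x => if 1 / (p ^ β * εs) ≤ T (x.1, x.2.1) then μ x / κ else 0) εs
        ≥ - Real.logb 2 p + ((1 + β) / β) * Real.logb 2 κ' := by
  by_cases hlt : κ < κ'
  · exact Or.inl hlt
  right
  push_neg at hlt
  -- basic positivity facts
  have hcard : (0 : ℝ) < Fintype.card Cv := by exact_mod_cast Fintype.card_pos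
  have hpp : 0 < p := lt_of_lt_of_le (by positivity) hp
  have hκ0 : 0 < κ := lt_of_lt_of_le hκ' hlt
  have hκ1 : κ ≤ 1 := by
    rw [hκ, ← hsum]
    exact Finset.sum_le_sum_of_subset_of_nonneg (Finset.filter_subset _ _)
      (fun x _ _ => hnn x)
  have hκ'1 : κ' ≤ 1 := hlt.trans hκ1
  have hβ' : β ≠ 0 := ne_of_gt hβ
  have hpβ : 0 < p ^ β := Real.rpow_pos_of_pos hpp β
  -- the threshold s
  set s : ℝ := p * κ' ^ (-(1 / β)) with hs
  have hκ'inv1 : 1 ≤ κ' ^ (-(1 / β)) :=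
    Real.one_le_rpow_of_pos_of_le_one_of_nonpos hκ' hκ'1
      (neg_nonpos.mpr (by positivity))
  have hs0 : 0 < s := mul_pos hpp (lt_of_lt_of_le one_pos hκ'inv1)
  have hps : p ≤ s := le_mul_of_one_le_right hpp.le hκ'inv1
  have hsβ : s ^ β = p ^ β / κ' := by
    rw [hs, Real.mul_rpow hpp.le (Real.rpow_nonneg hκ'.le _),
      ← Real.rpow_mul hκ'.le, show -(1 / β) * β = -1 by field_simp,
      Real.rpow_neg_one, div_eq_mul_inv]
  have hsβpos : 0 < s ^ β := Real.rpow_pos_of_pos hs0 β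
  -- notation
  set Φs := Finset.univ.filter
      (fun x : Cv × Zv × Ev => 1 / (p ^ β * εs) ≤ T (x.1, x.2.1)) with hΦs
  set μ' := (fun x : Cv × Zv × Ev =>
      if 1 / (p ^ β * εs) ≤ T (x.1, x.2.1) then μ x / κ else 0) with hμ'def
  set P := (fun x : Cv × Zv × Ev => condC μ x.1 x.2.1 x.2.2) with hPdef
  have hmargnn : ∀ z e, 0 ≤ margZE μ z e := fun z e => Finset.sum_nonneg fun c _ => hnn _
  have hPnn : ∀ x, 0 ≤ P x := by
    intro x
    rw [hPdef]
    simp only [condC]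
    split
    · exact le_rfl
    · exact div_nonneg (hnn _) (hmargnn _ _)
  have hμ'nn : ∀ x, 0 ≤ μ' x := by
    intro x
    rw [hμ'def]
    dsimp only
    split
    · exact div_nonneg (hnn x) hκ0.le
    · exact le_rfl
  have hμ'sum : ∑ x, μ' x = 1 := by
    rw [hμ'def]
    dsimp only
    rw [← Finset.sum_filter, ← Finset.sum_div, ← hΦs, ← hκ, div_self hκ0.ne']
  -- cap function
  set capf := (fun x : Cv × Zv × Ev => s * margZE μ x.2.1 x.2.2 / κ) with hcapf
  have hcapnn : ∀ x, 0 ≤ capf x := fun x =>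
    div_nonneg (mul_nonneg hs0.le (hmargnn _ _)) hκ0.le
  -- global PEF inequality
  have hmargEnn : ∀ e, 0 ≤ margE μ e := fun e =>
    Finset.sum_nonneg fun c _ => Finset.sum_nonneg fun z _ => hnn _
  have hmargEsum : ∑ e, margE μ e = 1 := by
    rw [← hsum, sum_triple_eq_e μ]
    rfl
  have hglob : ∑ x, μ x * T (x.1, x.2.1) * P x ^ β ≤ 1 := by
    rw [sum_triple_eq_e (fun x => μ x * T (x.1, x.2.1) * P x ^ β)]
    calc ∑ e, ∑ c, ∑ z, μ (c, z, e) * T (c, z) * P (c, z, e) ^ β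
        ≤ ∑ e, margE μ e := by
          apply Finset.sum_le_sum
          intro e _
          by_cases he : margE μ e = 0
          · have hz : ∀ c, ∀ z, μ (c, z, e) = 0 := by
              intro c z
              have h1 := (Finset.sum_eq_zero_iff_of_nonneg
                (fun c _ => Finset.sum_nonneg fun z _ => hnn (c, z, e))).mp he c
                (Finset.mem_univ c)
              exact (Finset.sum_eq_zero_iff_of_nonneg
                (fun z _ => hnn (c, z, e))).mp h1 z (Finset.mem_univ z)
            rw [he]
            apply le_of_eq
            apply Finset.sum_eq_zero
            intro c _
            apply Finset.sum_eq_zero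
            intro z _
            rw [hz c z, zero_mul, zero_mul]
          · have hpos : 0 < margE μ e := lt_of_le_of_ne (hmargEnn e) (Ne.symm he)
            have h2 := hPEF e he
            have h3 : ∑ c, ∑ z, μ (c, z, e) * T (c, z) * P (c, z, e) ^ β
                = margE μ e * ∑ c, ∑ z,
                    (μ (c, z, e) / margE μ e) * T (c, z) * condC μ c z e ^ β := by
              rw [Finset.mul_sum]
              apply Finset.sum_congr rfl
              intro c _
              rw [Finset.mul_sum]
              apply Finset.sum_congr rfl
              intro z _
              have : P (c, z, e) = condC μ c z e := rfl
              rw [this]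
              field_simp
            rw [h3]
            calc margE μ e * ∑ c, ∑ z,
                  (μ (c, z, e) / margE μ e) * T (c, z) * condC μ c z e ^ β
                ≤ margE μ e * 1 := mul_le_mul_of_nonneg_left h2 (hmargEnn e)
              _ = margE μ e := mul_one _
      _ = 1 := hmargEsum
  -- Markov
  have hglobnn : ∀ x, 0 ≤ μ x * T (x.1, x.2.1) * P x ^ β := fun x =>
    mul_nonneg (mul_nonneg (hnn x) (hT _)) (Real.rpow_nonneg (hPnn x) β)
  have hW : ∑ x ∈ Φs, μ x * P x ^ β ≤ p ^ β * εs := by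
    have h1 : ∀ x ∈ Φs, μ x * P x ^ β
        ≤ (p ^ β * εs) * (μ x * T (x.1, x.2.1) * P x ^ β) := by
      intro x hx
      have hTx : 1 / (p ^ β * εs) ≤ T (x.1, x.2.1) := (Finset.mem_filter.mp hx).2
      have hA : (0 : ℝ) < p ^ β * εs := by positivity
      have h2 : 1 ≤ (p ^ β * εs) * T (x.1, x.2.1) := by
        have := (div_le_iff₀ hA).mp hTx
        linarith [this, mul_comm (T (x.1, x.2.1)) (p ^ β * εs)]
      calc μ x * P x ^ β = 1 * (μ x * P x ^ β) := (one_mul _).symm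
        _ ≤ ((p ^ β * εs) * T (x.1, x.2.1)) * (μ x * P x ^ β) :=
            mul_le_mul_of_nonneg_right h2
              (mul_nonneg (hnn x) (Real.rpow_nonneg (hPnn x) β))
        _ = (p ^ β * εs) * (μ x * T (x.1, x.2.1) * P x ^ β) := by ring
    calc ∑ x ∈ Φs, μ x * P x ^ β
        ≤ ∑ x ∈ Φs, (p ^ β * εs) * (μ x * T (x.1, x.2.1) * P x ^ β) :=
          Finset.sum_le_sum h1
      _ = (p ^ β * εs) * ∑ x ∈ Φs, μ x * T (x.1, x.2.1) * P x ^ β :=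
          (Finset.mul_sum _ _ _).symm
      _ ≤ (p ^ β * εs) * ∑ x, μ x * T (x.1, x.2.1) * P x ^ β := by
          apply mul_le_mul_of_nonneg_left _ (by positivity)
          exact Finset.sum_le_sum_of_subset_of_nonneg (Finset.filter_subset _ _)
            (fun x _ _ => hglobnn x)
      _ ≤ (p ^ β * εs) * 1 := mul_le_mul_of_nonneg_left hglob (by positivity)
      _ = p ^ β * εs := mul_one _
  -- ν₀, m, r, R
  set ν₀ := (fun x => min (μ' x) (capf x)) with hν₀def
  have hν₀nn : ∀ x, 0 ≤ ν₀ x := fun x => le_min (hμ'nn x) (hcapnn x)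
  have hν₀le : ∀ x, ν₀ x ≤ μ' x := fun x => min_le_left _ _
  have hν₀cap : ∀ x, ν₀ x ≤ capf x := fun x => min_le_right _ _
  set m := 1 - ∑ x, ν₀ x with hm
  have hm0 : 0 ≤ m := by
    have h1 : ∑ x, ν₀ x ≤ ∑ x, μ' x := Finset.sum_le_sum fun x _ => hν₀le x
    rw [hμ'sum] at h1
    rw [hm]; linarith
  have hmsum : ∑ x, (μ' x - ν₀ x) = m := by
    rw [Finset.sum_sub_distrib, hμ'sum, hm]
  -- pointwise Markov bound
  have hpt : ∀ x, μ' x - ν₀ x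
      ≤ (if 1 / (p ^ β * εs) ≤ T (x.1, x.2.1) then μ x * P x ^ β else 0)
          / (κ * s ^ β) := by
    intro x
    by_cases hle : μ' x ≤ capf x
    · rw [hν₀def]
      dsimp only
      rw [min_eq_left hle, sub_self]
      apply div_nonneg _ (by positivity)
      split
      · exact mul_nonneg (hnn x) (Real.rpow_nonneg (hPnn x) β)
      · exact le_rfl
    · push_neg at hle
      have hν₀x : ν₀ x = capf x := min_eq_right hle.le
      have hμ'pos : 0 < μ' x := lt_of_le_of_lt (hcapnn x) hle
      have hΦx : 1 / (p ^ β * εs) ≤ T (x.1, x.2.1) := by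
        by_contra h
        have : μ' x = 0 := by rw [hμ'def]; simp only [if_neg h]
        rw [this] at hμ'pos
        exact lt_irrefl _ hμ'pos
      have hμ'x : μ' x = μ x / κ := by rw [hμ'def]; simp only [if_pos hΦx]
      have hμx : 0 < μ x := by
        rw [hμ'x] at hμ'pos
        have h := mul_pos hμ'pos hκ0
        rwa [div_mul_cancel₀ _ hκ0.ne'] at h
      have hmargpos : 0 < margZE μ x.2.1 x.2.2 := by
        have hle' : μ x ≤ margZE μ x.2.1 x.2.2 :=
          Finset.single_le_sum (fun c _ => hnn (c, x.2.1, x.2.2)) (Finset.mem_univ x.1)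
        linarith
      have hPx : P x = μ x / margZE μ x.2.1 x.2.2 := by
        rw [hPdef]
        simp only [condC, if_neg hmargpos.ne']
      have h2 : s * margZE μ x.2.1 x.2.2 < μ x := by
        rw [hμ'x, hcapf] at hle
        have := (div_lt_div_iff_of_pos_right hκ0).mp hle
        linarith
      have hsP : s ≤ P x := by
        rw [hPx, le_div_iff₀ hmargpos]
        linarith
      have hsPβ : s ^ β ≤ P x ^ β := Real.rpow_le_rpow hs0.le hsP hβ.le
      rw [hν₀x, if_pos hΦx]
      calc μ' x - capf x ≤ μ x / κ := by
            rw [hμ'x]; linarith [hcapnn x]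
        _ = μ x * s ^ β / (κ * s ^ β) := by
            rw [mul_comm κ (s ^ β), ← div_div, mul_div_assoc, div_self hsβpos.ne',
              mul_one]
        _ ≤ μ x * P x ^ β / (κ * s ^ β) := by
            apply div_le_div_of_nonneg_right ?_ (by positivity)
            exact mul_le_mul_of_nonneg_left hsPβ (hnn x)
  have hmbound : m ≤ εs * κ' / κ := by
    calc m = ∑ x, (μ' x - ν₀ x) := hmsum.symm
      _ ≤ ∑ x, (if 1 / (p ^ β * εs) ≤ T (x.1, x.2.1) then μ x * P x ^ β else 0)
            / (κ * s ^ β) := Finset.sum_le_sum fun x _ => hpt x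
      _ = (∑ x ∈ Φs, μ x * P x ^ β) / (κ * s ^ β) := by
          rw [← Finset.sum_div]
          congr 1
          rw [hΦs, Finset.sum_filter]
      _ ≤ (p ^ β * εs) / (κ * s ^ β) := by
          apply div_le_div_of_nonneg_right hW (by positivity)
      _ = εs * κ' / κ := by
          rw [hsβ]
          field_simp
  have hmεs : m ≤ εs := by
    have : εs * κ' / κ ≤ εs := by
      rw [div_le_iff₀ hκ0]
      nlinarith
    linarith
  set r := (fun x => capf x - ν₀ x) with hrdef
  have hrnn : ∀ x, 0 ≤ r x := fun x => sub_nonneg.mpr (hν₀cap x)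
  set R := ∑ x, r x with hR
  have hRnn : 0 ≤ R := Finset.sum_nonneg fun x _ => hrnn x
  have hmargy : ∑ y : Zv × Ev, margZE μ y.1 y.2 = 1 := by
    rw [Fintype.sum_prod_type]
    rw [sum_margZE_eq μ, hsum]
  have hcapsum : ∑ x, capf x = (Fintype.card Cv : ℝ) * (s / κ) := by
    simp only [hcapf]
    calc ∑ x : Cv × Zv × Ev, s * margZE μ x.2.1 x.2.2 / κ
        = ∑ c : Cv, ∑ y : Zv × Ev, (s * margZE μ y.1 y.2 / κ) := Fintype.sum_prod_type _
      _ = ∑ _c : Cv, (s / κ) := by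
          apply Finset.sum_congr rfl
          intro c _
          rw [← Finset.sum_div, ← Finset.mul_sum, hmargy, mul_one]
      _ = (Fintype.card Cv : ℝ) * (s / κ) := by
          rw [Finset.sum_const, Finset.card_univ, nsmul_eq_mul]
  have hsν₀ : ∑ x, ν₀ x = 1 - m := by rw [hm]; ring
  have hRm : m ≤ R := by
    have h3 : 1 ≤ (Fintype.card Cv : ℝ) * p := by
      have := (div_le_iff₀ hcard).mp hp
      linarith [mul_comm p (Fintype.card Cv : ℝ)]
    have h4 : κ ≤ (Fintype.card Cv : ℝ) * s := by
      have : (Fintype.card Cv : ℝ) * p ≤ (Fintype.card Cv : ℝ) * s :=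
        mul_le_mul_of_nonneg_left hps hcard.le
      linarith
    have h5 : (1 : ℝ) ≤ (Fintype.card Cv : ℝ) * (s / κ) := by
      rw [mul_div_assoc'] at *
      rw [le_div_iff₀ hκ0]
      linarith
    have h6 : R = (Fintype.card Cv : ℝ) * (s / κ) - (1 - m) := by
      rw [hR, hrdef]
      dsimp only
      rw [Finset.sum_sub_distrib, hcapsum, hsν₀]
    linarith
  -- the smoothing ν
  set ν := (fun x => ν₀ x + (m / R) * r x) with hνdef
  have hmR1 : m / R ≤ 1 := by
    rcases eq_or_ne R 0 with h0 | h0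
    · rw [h0, div_zero]; norm_num
    · exact (div_le_one (lt_of_le_of_ne hRnn (Ne.symm h0))).mpr hRm
  have hmRnn : 0 ≤ m / R := div_nonneg hm0 hRnn
  have hνnn : ∀ x, 0 ≤ ν x := fun x =>
    add_nonneg (hν₀nn x) (mul_nonneg hmRnn (hrnn x))
  have hmRR : (m / R) * R = m := by
    rcases eq_or_ne R 0 with h0 | h0
    · have hm0' : m = 0 := le_antisymm (h0 ▸ hRm) hm0
      rw [h0, hm0', mul_zero]
    · rw [div_mul_cancel₀ _ h0]
  have hνsum : ∑ x, ν x = 1 := by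
    rw [hνdef]
    dsimp only
    rw [Finset.sum_add_distrib, ← Finset.mul_sum, ← hR, hmRR, hsν₀]
    ring
  have hνcap : ∀ x, ν x ≤ capf x := by
    intro x
    have h1 : (m / R) * r x ≤ r x := mul_le_of_le_one_left (hrnn x) hmR1
    have h2 : ν x ≤ ν₀ x + r x := by rw [hνdef]; dsimp only; linarith
    have h3 : ν₀ x + r x = capf x := by rw [hrdef]; ring
    linarith
  -- TV bound
  have hTV : TV ν μ' ≤ εs := by
    have hptw : ∀ x, |ν x - μ' x| ≤ (m / R) * r x + (μ' x - ν₀ x) := by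
      intro x
      have h1 : ν x - μ' x = (m / R) * r x - (μ' x - ν₀ x) := by
        rw [hνdef]; dsimp only; ring
      rw [h1, sub_eq_add_neg]
      calc |(m / R) * r x + -(μ' x - ν₀ x)|
          ≤ |(m / R) * r x| + |-(μ' x - ν₀ x)| := abs_add_le _ _
        _ = (m / R) * r x + (μ' x - ν₀ x) := by
            rw [abs_neg, abs_of_nonneg (mul_nonneg hmRnn (hrnn x)),
              abs_of_nonneg (sub_nonneg.mpr (hν₀le x))]
    calc TV ν μ' = (1 / 2) * ∑ x, |ν x - μ' x| := rfl
      _ ≤ (1 / 2) * ∑ x, ((m / R) * r x + (μ' x - ν₀ x)) := by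
          apply mul_le_mul_of_nonneg_left (Finset.sum_le_sum fun x _ => hptw x)
          norm_num
      _ = (1 / 2) * ((m / R) * R + m) := by
          rw [Finset.sum_add_distrib, ← Finset.mul_sum, ← hR, hmsum]
      _ = m := by rw [hmRR]; ring
      _ ≤ εs := hmεs
  -- guessing probability bound
  have hPg : PguessE ν ≤ s / κ := by
    have hmargnn' : ∀ z e, 0 ≤ margZE ν z e := fun z e =>
      Finset.sum_nonneg fun c _ => hνnn _
    have hbound : ∀ z e, margZE ν z e *
        Finset.univ.sup' Finset.univ_nonempty (fun c => condC ν c z e)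
        ≤ s * margZE μ z e / κ := by
      intro z e
      by_cases h0 : margZE ν z e = 0
      · rw [h0, zero_mul]
        exact div_nonneg (mul_nonneg hs0.le (hmargnn z e)) hκ0.le
      · obtain ⟨c₀, -, hc₀⟩ :=
          Finset.exists_mem_eq_sup' Finset.univ_nonempty (fun c => condC ν c z e)
        rw [hc₀]
        show margZE ν z e * condC ν c₀ z e ≤ _
        rw [condC, if_neg h0, mul_comm, div_mul_cancel₀ _ h0]
        exact hνcap (c₀, z, e)
    calc PguessE ν
        ≤ ∑ z, ∑ e, s * margZE μ z e / κ :=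
          Finset.sum_le_sum fun z _ => Finset.sum_le_sum fun e _ => hbound z e
      _ = s / κ := by
          have h1 : ∀ z, ∑ e, s * margZE μ z e / κ
              = s * (∑ e, margZE μ z e) / κ := by
            intro z
            rw [← Finset.sum_div, ← Finset.mul_sum]
          rw [Finset.sum_congr rfl fun z _ => h1 z, ← Finset.sum_div,
            ← Finset.mul_sum, sum_margZE_eq μ, hsum, mul_one]
  -- the infimum set
  set S : Set ℝ := {pg : ℝ | ∃ ν' : Cv × Zv × Ev → ℝ,
      (∀ x, 0 ≤ ν' x) ∧ (∑ x, ν' x = 1) ∧ TV ν' μ' ≤ εs ∧ PguessE ν' = pg} with hS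
  have hmem : PguessE ν ∈ S := ⟨ν, hνnn, hνsum, hTV, rfl⟩
  have hlb : ∀ q ∈ S, 1 / (Fintype.card Cv : ℝ) ≤ q := by
    rintro q ⟨ν', hnn', hsum', -, rfl⟩
    have hmargnn' : ∀ z e, 0 ≤ margZE ν' z e := fun z e =>
      Finset.sum_nonneg fun c _ => hnn' _
    have hterm : ∀ z e, margZE ν' z e / (Fintype.card Cv : ℝ)
        ≤ margZE ν' z e *
          Finset.univ.sup' Finset.univ_nonempty (fun c => condC ν' c z e) := by
      intro z e
      by_cases h0 : margZE ν' z e = 0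
      · rw [h0, zero_mul, zero_div]
      · have hpos : 0 < margZE ν' z e := lt_of_le_of_ne (hmargnn' z e) (Ne.symm h0)
        have hsum1 : ∑ c, condC ν' c z e = 1 := by
          simp only [condC, if_neg h0]
          rw [← Finset.sum_div]
          have : (∑ c, ν' (c, z, e)) = margZE ν' z e := rfl
          rw [this, div_self h0]
        have hsupge : 1 / (Fintype.card Cv : ℝ)
            ≤ Finset.univ.sup' Finset.univ_nonempty (fun c => condC ν' c z e) := by
          have hle : ∑ c, condC ν' c z e
              ≤ Finset.univ.card •
                Finset.univ.sup' Finset.univ_nonempty (fun c => condC ν' c z e) :=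
            Finset.sum_le_card_nsmul _ _ _
              (fun c _ => Finset.le_sup' (fun c => condC ν' c z e) (Finset.mem_univ c))
          rw [hsum1, Finset.card_univ, nsmul_eq_mul] at hle
          rw [div_le_iff₀ hcard]
          linarith [mul_comm (Fintype.card Cv : ℝ)
            (Finset.univ.sup' Finset.univ_nonempty (fun c => condC ν' c z e))]
        calc margZE ν' z e / (Fintype.card Cv : ℝ)
            = margZE ν' z e * (1 / (Fintype.card Cv : ℝ)) := by ring
          _ ≤ _ := mul_le_mul_of_nonneg_left hsupge (hmargnn' z e)
    calc 1 / (Fintype.card Cv : ℝ)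
        = (∑ z, ∑ e, margZE ν' z e) / (Fintype.card Cv : ℝ) := by
          rw [sum_margZE_eq ν', hsum']
      _ = ∑ z, ∑ e, margZE ν' z e / (Fintype.card Cv : ℝ) := by
          rw [Finset.sum_div]
          exact Finset.sum_congr rfl fun z _ => Finset.sum_div _ _ _
      _ ≤ PguessE ν' :=
          Finset.sum_le_sum fun z _ => Finset.sum_le_sum fun e _ => hterm z e
  have hSne : S.Nonempty := ⟨_, hmem⟩
  have hSbdd : BddBelow S := ⟨_, hlb⟩
  have hInfpos : 0 < sInf S :=
    lt_of_lt_of_le (by positivity) (le_csInf hSne hlb)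
  have hsκκ' : s / κ ≤ s / κ' := by
    apply div_le_div_of_nonneg_left hs0.le hκ' hlt
  have hInfle : sInf S ≤ s / κ' := (csInf_le hSbdd hmem).trans (hPg.trans hsκκ')
  have hHmin : HminE μ' εs = - Real.logb 2 (sInf S) := by rw [hS]; rfl
  have hlog2 : Real.log 2 ≠ 0 := ne_of_gt (Real.log_pos one_lt_two)
  have harith : - Real.logb 2 (s / κ')
      = - Real.logb 2 p + ((1 + β) / β) * Real.logb 2 κ' := by
    rw [hs]
    rw [Real.logb, Real.logb, Real.logb]
    rw [Real.log_div (by positivity) hκ'.ne',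
      Real.log_mul hpp.ne' (ne_of_gt (Real.rpow_pos_of_pos hκ' _)),
      Real.log_rpow hκ']
    field_simp
    ring
  rw [ge_iff_le, hHmin, ← harith]
  apply neg_le_neg
  exact Real.logb_le_logb_of_le one_lt_two hInfpos hInfle
end
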